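/- arXiv:2306.10390 — 3 statements merged into one kernel-verified Lean document; each statement's English description precedes it below -/
import Mathlib

section
/- Andréief's identity: For a positive (probability) measure μ on a real interval I and N ≥ 1, one has (1/N!) ∫_I … ∫_I ∏_{1≤i<j≤N} (u_j − u_i)² μ(du_1)⋯μ(du_N) = det{ ∫_I u^{k+ℓ} μ(du) }_{k,ℓ=0}^{N−1}, provided all moments ∫_I u^m μ(du) for 0 ≤ m ≤ 2N−2 are finite. -/
open MeasureTheory

lemma pi_integrable_prod {n : ℕ} (μ : Measure ℝ) [SigmaFinite μ] (f : Fin n → ℝ → ℝ)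
    (hf : ∀ i, Integrable (f i) μ) :
    Integrable (fun x : Fin n → ℝ => ∏ i, f i (x i)) (Measure.pi fun _ => μ) := by
  letI : MeasureSpace ℝ := ⟨μ⟩
  exact Integrable.fintype_prod hf

lemma pi_integral_prod {n : ℕ} (μ : Measure ℝ) [SigmaFinite μ] (f : Fin n → ℝ → ℝ) :
    ∫ x : Fin n → ℝ, ∏ i, f i (x i) ∂(Measure.pi fun _ => μ) = ∏ i, ∫ x, f i x ∂μ := by
  letI : MeasureSpace ℝ := ⟨μ⟩
  exact integral_fintype_prod_eq_prod f

lemma vandermonde_sq (N : ℕ) (u : Fin N → ℝ) :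
    (∏ i : Fin N, ∏ j ∈ Finset.Ioi i, (u j - u i) ^ 2)
      = ∑ σ : Equiv.Perm (Fin N), ∑ τ : Equiv.Perm (Fin N),
        (((Equiv.Perm.sign σ : ℤ) : ℝ) * ((Equiv.Perm.sign τ : ℤ) : ℝ)) *
          ∏ i, u i ^ (((σ⁻¹ i : Fin N) : ℕ) + ((τ⁻¹ i : Fin N) : ℕ)) := by
  have hdet : (Matrix.vandermonde u).det
      = ∑ σ : Equiv.Perm (Fin N), ((Equiv.Perm.sign σ : ℤ) : ℝ) *
          ∏ i, u i ^ ((σ⁻¹ i : Fin N) : ℕ) := by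
    rw [Matrix.det_apply]
    refine Finset.sum_congr rfl fun σ _ => ?_
    rw [Units.smul_def, zsmul_eq_mul]
    congr 1
    rw [← Equiv.prod_comp σ (fun i => u i ^ ((σ⁻¹ i : Fin N) : ℕ))]
    simp [Matrix.vandermonde]
  have hv : (∏ i : Fin N, ∏ j ∈ Finset.Ioi i, (u j - u i) ^ 2)
      = ((Matrix.vandermonde u).det) ^ 2 := by
    rw [Matrix.det_vandermonde]
    simp_rw [Finset.prod_pow]
  rw [hv, sq, hdet, Finset.sum_mul_sum]
  refine Finset.sum_congr rfl fun σ _ => Finset.sum_congr rfl fun τ _ => ?_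
  rw [mul_mul_mul_comm]
  congr 1
  rw [← Finset.prod_mul_distrib]
  exact Finset.prod_congr rfl fun i _ => (pow_add _ _ _).symm

/-- Andréief's identity. -/
theorem andreief_identity (N : ℕ) (hN : 1 ≤ N) (I : Set ℝ) (hI : I.OrdConnected)
    (μ : Measure ℝ) [IsProbabilityMeasure μ] (hsupp : μ Iᶜ = 0)
    (hmom : ∀ m : ℕ, m ≤ 2 * N - 2 → Integrable (fun u : ℝ => u ^ m) μ) :
    ((N.factorial : ℝ))⁻¹ *
        ∫ u : Fin N → ℝ, (∏ i : Fin N, ∏ j ∈ Finset.Ioi i, (u j - u i) ^ 2)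
          ∂(Measure.pi fun _ => μ)
      = Matrix.det (Matrix.of fun k ℓ : Fin N =>
          ∫ u : ℝ, u ^ ((k : ℕ) + (ℓ : ℕ)) ∂μ) := by
  classical
  have hfac : (N.factorial : ℝ) ≠ 0 := Nat.cast_ne_zero.mpr (Nat.factorial_ne_zero N)
  set M : Matrix (Fin N) (Fin N) ℝ :=
    Matrix.of (fun k ℓ : Fin N => ∫ u : ℝ, u ^ ((k : ℕ) + (ℓ : ℕ)) ∂μ) with hM
  set m : ℕ → ℝ := fun j => ∫ u : ℝ, u ^ j ∂μ with hm
  have hle : ∀ i j : Fin N, (i : ℕ) + (j : ℕ) ≤ 2 * N - 2 := by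
    intro i j; have hi := i.is_lt; have hj := j.is_lt; omega
  have hint : ∀ a b : Fin N → Fin N,
      Integrable (fun u : Fin N → ℝ => ∏ i, u i ^ (((a i) : ℕ) + ((b i) : ℕ)))
        (Measure.pi fun _ => μ) := fun a b =>
    pi_integrable_prod μ (fun i x => x ^ (((a i) : ℕ) + ((b i) : ℕ)))
      (fun i => hmom _ (hle _ _))
  -- compute the integral
  have hI1 : ∫ u : Fin N → ℝ, (∏ i : Fin N, ∏ j ∈ Finset.Ioi i, (u j - u i) ^ 2)
        ∂(Measure.pi fun _ => μ)
      = ∑ σ : Equiv.Perm (Fin N), ∑ τ : Equiv.Perm (Fin N),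
        (((Equiv.Perm.sign σ : ℤ) : ℝ) * ((Equiv.Perm.sign τ : ℤ) : ℝ)) *
          ∏ i, m (((σ⁻¹ i : Fin N) : ℕ) + ((τ⁻¹ i : Fin N) : ℕ)) := by
    simp_rw [vandermonde_sq]
    rw [integral_finset_sum _ (fun σ _ => integrable_finset_sum _
      (fun τ _ => ((hint (fun i => σ⁻¹ i) (fun i => τ⁻¹ i)).const_mul _)))]
    refine Finset.sum_congr rfl fun σ _ => ?_
    rw [integral_finset_sum _ (fun τ _ =>
      ((hint (fun i => σ⁻¹ i) (fun i => τ⁻¹ i)).const_mul _))]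
    refine Finset.sum_congr rfl fun τ _ => ?_
    rw [integral_const_mul,
      pi_integral_prod μ (fun i x => x ^ (((σ⁻¹ i : Fin N) : ℕ) + ((τ⁻¹ i : Fin N) : ℕ)))]
  -- algebraic identity
  have h2 : ∀ σ : Equiv.Perm (Fin N),
      (∑ τ : Equiv.Perm (Fin N), ((Equiv.Perm.sign τ : ℤ) : ℝ) *
          ∏ i, m (((σ i : Fin N) : ℕ) + ((τ i : Fin N) : ℕ)))
        = ((Equiv.Perm.sign σ : ℤ) : ℝ) * M.det := by
    intro σ
    have hp := Matrix.det_permute' σ M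
    rw [Matrix.det_apply] at hp
    rw [← hp]
    refine Finset.sum_congr rfl fun τ _ => ?_
    rw [Units.smul_def, zsmul_eq_mul]
    congr 1
    refine Finset.prod_congr rfl fun i _ => ?_
    simp [hM, m, Nat.add_comm]
  have hre : ∀ g : Equiv.Perm (Fin N) → ℝ,
      (∑ σ : Equiv.Perm (Fin N), g σ⁻¹) = ∑ σ : Equiv.Perm (Fin N), g σ :=
    fun g => Equiv.sum_comp (Equiv.inv (Equiv.Perm (Fin N))) g
  have hsum : (∑ σ : Equiv.Perm (Fin N), ∑ τ : Equiv.Perm (Fin N),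
        (((Equiv.Perm.sign σ : ℤ) : ℝ) * ((Equiv.Perm.sign τ : ℤ) : ℝ)) *
          ∏ i, m (((σ⁻¹ i : Fin N) : ℕ) + ((τ⁻¹ i : Fin N) : ℕ)))
      = (N.factorial : ℝ) * M.det := by
    set G : Equiv.Perm (Fin N) → Equiv.Perm (Fin N) → ℝ := fun σ' τ' =>
      (((Equiv.Perm.sign σ' : ℤ) : ℝ) * ((Equiv.Perm.sign τ' : ℤ) : ℝ)) *
        ∏ i, m (((σ' i : Fin N) : ℕ) + ((τ' i : Fin N) : ℕ)) with hG
    have step1 : ∀ σ τ : Equiv.Perm (Fin N),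
        (((Equiv.Perm.sign σ : ℤ) : ℝ) * ((Equiv.Perm.sign τ : ℤ) : ℝ)) *
          ∏ i, m (((σ⁻¹ i : Fin N) : ℕ) + ((τ⁻¹ i : Fin N) : ℕ)) = G σ⁻¹ τ⁻¹ := by
      intro σ τ
      simp [hG, Equiv.Perm.sign_inv]
    calc (∑ σ : Equiv.Perm (Fin N), ∑ τ : Equiv.Perm (Fin N),
        (((Equiv.Perm.sign σ : ℤ) : ℝ) * ((Equiv.Perm.sign τ : ℤ) : ℝ)) *
          ∏ i, m (((σ⁻¹ i : Fin N) : ℕ) + ((τ⁻¹ i : Fin N) : ℕ)))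
        = ∑ σ : Equiv.Perm (Fin N), ∑ τ : Equiv.Perm (Fin N), G σ⁻¹ τ⁻¹ := by
          simp_rw [step1]
      _ = ∑ σ : Equiv.Perm (Fin N), ∑ τ : Equiv.Perm (Fin N), G σ⁻¹ τ :=
          Finset.sum_congr rfl fun σ _ => hre (G σ⁻¹)
      _ = ∑ σ : Equiv.Perm (Fin N), ∑ τ : Equiv.Perm (Fin N), G σ τ :=
          hre (fun σ => ∑ τ : Equiv.Perm (Fin N), G σ τ)
      _ = ∑ σ : Equiv.Perm (Fin N), ((Equiv.Perm.sign σ : ℤ) : ℝ) *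
            (((Equiv.Perm.sign σ : ℤ) : ℝ) * M.det) := by
          refine Finset.sum_congr rfl fun σ _ => ?_
          rw [← h2 σ, Finset.mul_sum]
          exact Finset.sum_congr rfl fun τ _ => by rw [hG]; ring
      _ = ∑ σ : Equiv.Perm (Fin N), M.det := by
          refine Finset.sum_congr rfl fun σ _ => ?_
          rw [← mul_assoc, ← Int.cast_mul, ← Units.val_mul, Int.units_mul_self]
          simp
      _ = (N.factorial : ℝ) * M.det := by
          rw [Finset.sum_const, Finset.card_univ, Fintype.card_perm, Fintype.card_fin,
            nsmul_eq_mul]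
  rw [hI1, hsum, inv_mul_cancel_left₀ hfac]
end

section
/- Heine's identity on the circle: For a probability measure μ on the unit circle S¹ and N ≥ 1, (1/N!) ∫_{S¹}⋯∫_{S¹} ∏_{i<j} |u_i − u_j|² μ(du_1)⋯μ(du_N) = det{ ∫_{S¹} u^{k−ℓ} μ(du) }_{k,ℓ=0}^{N−1}, i.e. the generalized Toeplitz determinant of the Fourier coefficients of μ. -/
open MeasureTheory

section HeineAux

open Finset Equiv

private lemma heine_conj_of_norm_one (z : ℂ) (hz : ‖z‖ = 1) : (starRingEnd ℂ) z = z⁻¹ := by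
  have h : (starRingEnd ℂ) z * z = 1 := by
    rw [mul_comm, Complex.mul_conj]
    norm_cast
    rw [Complex.normSq_eq_norm_sq, hz]; norm_num
  exact eq_inv_of_mul_eq_one_left h

private lemma heine_det_vand (N : ℕ) (w : Fin N → ℂ) :
    Matrix.det (Matrix.vandermonde w)
      = ∑ σ : Perm (Fin N), ((Perm.sign σ : ℤ) : ℂ) * ∏ i, w i ^ (σ i : ℕ) := by
  rw [← Matrix.det_transpose, Matrix.det_apply']
  simp [Matrix.vandermonde]

private lemma heine_pointwise (N : ℕ) (u : Fin N → ℂ) (hu : ∀ i, ‖u i‖ = 1) :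
    (∏ i : Fin N, ∏ j ∈ Finset.Ioi i, (‖u i - u j‖ : ℂ) ^ 2)
      = ∑ p : Perm (Fin N) × Perm (Fin N),
          (((Perm.sign p.1 : ℤ) : ℂ) * ((Perm.sign p.2 : ℤ) : ℂ)) *
            ∏ i, (u i) ^ ((p.1 i : ℤ) - (p.2 i : ℤ)) := by
  have hne : ∀ i, u i ≠ 0 := fun i => by
    intro h; have := hu i; rw [h] at this; norm_num at this
  have key : ∀ i j, ((‖u i - u j‖ : ℂ))^2
      = (u j - u i) * ((starRingEnd ℂ) (u j) - (starRingEnd ℂ) (u i)) := by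
    intro i j
    have h1 : ((‖u i - u j‖:ℂ))^2 = (u i - u j) * (starRingEnd ℂ) (u i - u j) := by
      rw [Complex.mul_conj]
      norm_cast
      rw [Complex.normSq_eq_norm_sq]
    rw [h1, map_sub]; ring
  have hterm : ∀ (a b : ℕ) (i : Fin N),
      u i ^ a * (starRingEnd ℂ) (u i) ^ b = u i ^ ((a:ℤ) - b) := by
    intro a b i
    rw [heine_conj_of_norm_one _ (hu i), inv_pow, ← zpow_natCast (u i) a, ← zpow_natCast (u i) b,
      ← zpow_neg, ← zpow_add₀ (hne i), sub_eq_add_neg]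
  calc (∏ i : Fin N, ∏ j ∈ Finset.Ioi i, (‖u i - u j‖ : ℂ) ^ 2)
      = (∏ i : Fin N, ∏ j ∈ Finset.Ioi i, (u j - u i)) *
        (∏ i : Fin N, ∏ j ∈ Finset.Ioi i, ((starRingEnd ℂ) (u j) - (starRingEnd ℂ) (u i))) := by
        rw [← Finset.prod_mul_distrib]
        simp_rw [← Finset.prod_mul_distrib]
        exact Finset.prod_congr rfl fun i _ => Finset.prod_congr rfl fun j _ => key i j
    _ = Matrix.det (Matrix.vandermonde u) *
        Matrix.det (Matrix.vandermonde ((starRingEnd ℂ) ∘ u)) := by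
        rw [Matrix.det_vandermonde, Matrix.det_vandermonde]; rfl
    _ = ∑ σ : Perm (Fin N), ∑ τ : Perm (Fin N),
          (((Perm.sign σ : ℤ) : ℂ) * ∏ i, u i ^ (σ i : ℕ)) *
          (((Perm.sign τ : ℤ) : ℂ) * ∏ i, (starRingEnd ℂ) (u i) ^ (τ i : ℕ)) := by
        rw [heine_det_vand, heine_det_vand, Finset.sum_mul_sum]
        simp only [Function.comp_apply]
    _ = ∑ p : Perm (Fin N) × Perm (Fin N),
          (((Perm.sign p.1 : ℤ) : ℂ) * ((Perm.sign p.2 : ℤ) : ℂ)) *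
            ∏ i, (u i) ^ ((p.1 i : ℤ) - (p.2 i : ℤ)) := by
        rw [Fintype.sum_prod_type]
        refine Finset.sum_congr rfl fun σ _ => Finset.sum_congr rfl fun τ _ => ?_
        rw [mul_mul_mul_comm, ← Finset.prod_mul_distrib]
        simp_rw [hterm]

private lemma heine_comb (N : ℕ) (c : ℤ → ℂ) :
    ∑ p : Perm (Fin N) × Perm (Fin N),
      (((Perm.sign p.1 : ℤ) : ℂ) * ((Perm.sign p.2 : ℤ) : ℂ)) *
        ∏ i, c ((p.1 i : ℤ) - (p.2 i : ℤ))
    = (N.factorial : ℂ) *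
      Matrix.det (Matrix.of fun k ℓ : Fin N => c ((k : ℤ) - (ℓ : ℤ))) := by
  rw [Fintype.sum_prod_type_right]
  have step : ∀ τ : Perm (Fin N),
      (∑ σ : Perm (Fin N), (((Perm.sign σ : ℤ) : ℂ) * ((Perm.sign τ : ℤ) : ℂ)) *
        ∏ i, c ((σ i : ℤ) - (τ i : ℤ)))
      = Matrix.det (Matrix.of fun k ℓ : Fin N => c ((k : ℤ) - (ℓ : ℤ))) := by
    intro τ
    have hτ2 : ((Perm.sign τ : ℤ) : ℂ) * ((Perm.sign τ : ℤ) : ℂ) = 1 := by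
      rcases Int.units_eq_one_or (Perm.sign τ) with h | h <;> rw [h] <;> norm_num
    rw [Matrix.det_apply',
      ← Equiv.sum_comp (Equiv.mulRight τ) (fun σ : Perm (Fin N) =>
        (((Perm.sign σ : ℤ) : ℂ) * ((Perm.sign τ : ℤ) : ℂ)) * ∏ i, c ((σ i : ℤ) - (τ i : ℤ)))]
    refine Finset.sum_congr rfl fun π _ => ?_
    simp only [Equiv.coe_mulRight, Perm.mul_apply, Perm.sign_mul, Matrix.of_apply]
    have hsign : (((Perm.sign π * Perm.sign τ : ℤˣ) : ℤ) : ℂ) * ((Perm.sign τ : ℤ) : ℂ)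
        = ((Perm.sign π : ℤ) : ℂ) := by
      push_cast
      rw [mul_assoc, hτ2, mul_one]
    rw [hsign, ← Equiv.prod_comp τ (fun j => c ((π j : ℤ) - (j : ℤ)))]
  rw [Finset.sum_congr rfl fun τ _ => step τ, Finset.sum_const, Finset.card_univ,
    Fintype.card_perm, nsmul_eq_mul, Fintype.card_fin]

private lemma heine_meas_zpow (m : ℤ) : Measurable fun u : ℂ => u ^ m := by
  rcases m with n | n
  · simpa using measurable_id.pow_const n
  · simp only [zpow_negSucc]
    exact (measurable_id.pow_const (n+1)).inv

private lemma heine_pi_prod {ι : Type*} [Fintype ι] (μ : Measure ℂ) [SigmaFinite μ]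
    (f : ι → ℂ → ℂ) :
    ∫ x : ι → ℂ, ∏ i, f i (x i) ∂(Measure.pi fun _ => μ) = ∏ i, ∫ x, f i x ∂μ := by
  letI : MeasureSpace ℂ := ⟨μ⟩
  exact MeasureTheory.integral_fintype_prod_eq_prod f

end HeineAux

/-- Heine's identity on the unit circle. -/
theorem heine_identity (N : ℕ) (hN : 1 ≤ N) (μ : Measure ℂ) [IsProbabilityMeasure μ]
    (hsupp : μ (Metric.sphere (0 : ℂ) 1)ᶜ = 0) :
    (((N.factorial : ℝ))⁻¹ *
        ∫ u : Fin N → ℂ, (∏ i : Fin N, ∏ j ∈ Finset.Ioi i, ‖u i - u j‖ ^ 2)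
          ∂(Measure.pi fun _ => μ) : ℂ)
      = Matrix.det (Matrix.of fun k ℓ : Fin N =>
          ∫ u : ℂ, u ^ ((k : ℤ) - (ℓ : ℤ)) ∂μ) := by
  classical
  have hae0 : μ {z : ℂ | ¬ ‖z‖ = 1} = 0 := by
    have : {z : ℂ | ¬ ‖z‖ = 1} = (Metric.sphere (0 : ℂ) 1)ᶜ := by
      ext z; simp [mem_sphere_zero_iff_norm]
    rw [this]; exact hsupp
  have hπae : ∀ᵐ u ∂(Measure.pi fun _ : Fin N => μ), ∀ i, ‖u i‖ = 1 := by
    rw [MeasureTheory.ae_all_iff]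
    intro i
    rw [ae_iff]
    exact MeasureTheory.Measure.pi_eval_preimage_null (μ := fun _ : Fin N => μ) (i := i) hae0
  have hintg : ∀ m : Fin N → ℤ,
      Integrable (fun u : Fin N → ℂ => ∏ i, (u i) ^ (m i)) (Measure.pi fun _ : Fin N => μ) := by
    intro m
    have hmeas : Measurable (fun u : Fin N → ℂ => ∏ i, (u i) ^ (m i)) :=
      Finset.measurable_prod _ fun i _ => (heine_meas_zpow (m i)).comp (measurable_pi_apply i)
    refine Integrable.mono' (integrable_const 1) hmeas.aestronglyMeasurable ?_
    filter_upwards [hπae] with u hu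
    simp [norm_prod, norm_zpow, hu]
  have hint : (∫ u : Fin N → ℂ, (∏ i : Fin N, ∏ j ∈ Finset.Ioi i,
        ((‖u i - u j‖ : ℂ)) ^ 2) ∂(Measure.pi fun _ : Fin N => μ))
      = ∑ p : Equiv.Perm (Fin N) × Equiv.Perm (Fin N),
          (((Equiv.Perm.sign p.1 : ℤ) : ℂ) * ((Equiv.Perm.sign p.2 : ℤ) : ℂ)) *
            ∏ i, ∫ z : ℂ, z ^ ((p.1 i : ℤ) - (p.2 i : ℤ)) ∂μ := by
    rw [integral_congr_ae ((hπae.mono) fun u hu => heine_pointwise N u hu)]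
    rw [integral_finset_sum _ fun p _ =>
      ((hintg fun i => ((p.1 i : ℤ) - (p.2 i : ℤ))).const_mul _)]
    refine Finset.sum_congr rfl fun p _ => ?_
    rw [MeasureTheory.integral_const_mul,
      heine_pi_prod μ (fun i (z : ℂ) => z ^ ((p.1 i : ℤ) - (p.2 i : ℤ)))]
  have hcast : ((∫ u : Fin N → ℂ, (∏ i : Fin N, ∏ j ∈ Finset.Ioi i, ‖u i - u j‖ ^ 2)
        ∂(Measure.pi fun _ : Fin N => μ) : ℝ) : ℂ)
      = ∫ u : Fin N → ℂ, (∏ i : Fin N, ∏ j ∈ Finset.Ioi i,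
          ((‖u i - u j‖ : ℂ)) ^ 2) ∂(Measure.pi fun _ : Fin N => μ) := by
    rw [show (fun u : Fin N → ℂ => ∏ i : Fin N, ∏ j ∈ Finset.Ioi i,
          ((‖u i - u j‖ : ℂ)) ^ 2)
        = fun u : Fin N → ℂ =>
            ((∏ i : Fin N, ∏ j ∈ Finset.Ioi i, ‖u i - u j‖ ^ 2 : ℝ) : ℂ) from
      funext fun u => by push_cast; rfl]
    exact (integral_ofReal (𝕜 := ℂ)).symm
  rw [hcast, hint, heine_comb N (fun m => ∫ z : ℂ, z ^ m ∂μ)]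
  have hfac : ((N.factorial : ℂ)) ≠ 0 := Nat.cast_ne_zero.mpr (Nat.factorial_ne_zero N)
  push_cast
  rw [← mul_assoc, inv_mul_cancel₀ hfac, one_mul]
end

section
/- de Bruijn's identity, β = 4: For a probability measure μ on an interval I ⊆ ℝ (with μ absolutely continuous so that derivatives make sense and moments finite), (1/N!) ∫_I⋯∫_I ∏_{i<j} (u_j − u_i)⁴ μ(du_1)⋯μ(du_N) = pf{ B_{kℓ} }_{k,ℓ=0}^{2N−1}, where B_{kℓ} = ∫_I (u^k (u^ℓ)' − u^ℓ (u^k)') μ(du) = (ℓ − k) ∫_I u^{k+ℓ−1} μ(du). -/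
open MeasureTheory Finset

namespace DB

variable (N : ℕ)

def e2 : Fin N × Fin 2 ≃ Fin (2 * N) where
  toFun p := ⟨2 * p.1.1 + p.2.1, by have := p.1.2; have := p.2.2; omega⟩
  invFun l := (⟨l.1 / 2, by have := l.2; omega⟩, ⟨l.1 % 2, by omega⟩)
  left_inv p := by
    obtain ⟨⟨a, ha⟩, ⟨s, hs⟩⟩ := p
    simp only [Prod.mk.injEq, Fin.mk.injEq]
    omega
  right_inv l := by
    simp only [Fin.ext_iff]
    omega

def i0 (a : Fin N) : Fin (2 * N) := e2 N (a, 0)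
def i1 (a : Fin N) : Fin (2 * N) := e2 N (a, 1)

@[simp] lemma i0_val (a : Fin N) : (i0 N a).1 = 2 * a.1 := by simp [i0, e2]
@[simp] lemma i1_val (a : Fin N) : (i1 N a).1 = 2 * a.1 + 1 := by simp [i1, e2]

lemma i0_ne_i1 (a b : Fin N) : i0 N a ≠ i1 N b := by
  intro h
  have := congrArg Fin.val h
  simp only [i0_val, i1_val] at this
  omega

lemma i0_inj {a b : Fin N} (h : i0 N a = i0 N b) : a = b := by
  simp only [Fin.ext_iff, i0_val] at h ⊢; omega

lemma i1_inj {a b : Fin N} (h : i1 N a = i1 N b) : a = b := by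
  simp only [Fin.ext_iff, i1_val] at h ⊢; omega

theorem prod_pairs {M : Type*} [CommMonoid M] (f : Fin (2 * N) → M) :
    ∏ l, f l = ∏ a, f (i0 N a) * f (i1 N a) := by
  rw [← (e2 N).prod_comp f, Fintype.prod_prod_type]
  refine Finset.prod_congr rfl fun a _ => ?_
  rw [Fin.prod_univ_two]
  rfl

theorem prod_square_split {M : Type*} [CommMonoid M] {n : ℕ} (G : Fin n → Fin n → M)
    (hG : ∀ a b, b < a → G a b = 1) :
    ∏ a, ∏ b, G a b = (∏ a, G a a) * ∏ a, ∏ b ∈ Ioi a, G a b := by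
  rw [← Finset.prod_mul_distrib]
  refine Finset.prod_congr rfl fun a _ => ?_
  have hu : (univ : Finset (Fin n)) = insert a (Ioi a) ∪ Iio a := by
    ext b
    simp only [mem_univ, mem_union, mem_insert, mem_Ioi, mem_Iio, true_iff]
    omega
  have hd : Disjoint (insert a (Ioi a)) (Iio a : Finset (Fin n)) := by
    rw [Finset.disjoint_left]
    intro b hb hb'
    simp only [mem_insert, mem_Ioi] at hb
    simp only [mem_Iio] at hb'
    rcases hb with rfl | hb
    · exact absurd hb' (lt_irrefl _)
    · exact absurd (hb'.trans hb) (lt_irrefl _)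
  rw [hu, Finset.prod_union hd, Finset.prod_insert (by simp),
    Finset.prod_eq_one (fun b hb => hG a b (Finset.mem_Iio.mp hb)), mul_one]

lemma e2_lt_iff (p q : Fin N × Fin 2) :
    e2 N p < e2 N q ↔ 2 * p.1.1 + p.2.1 < 2 * q.1.1 + q.2.1 := Iff.rfl

theorem prod_Ioi_split {M : Type*} [CommMonoid M] (f : Fin (2 * N) → Fin (2 * N) → M) :
    ∏ i, ∏ j ∈ Ioi i, f i j
      = (∏ a, f (i0 N a) (i1 N a)) *
        ∏ a, ∏ b ∈ Ioi a,
          (f (i0 N a) (i0 N b) * f (i0 N a) (i1 N b) * f (i1 N a) (i0 N b)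
            * f (i1 N a) (i1 N b)) := by
  have hIoi : ∀ i : Fin (2 * N), (Ioi i : Finset (Fin (2 * N))) = univ.filter (fun j => i < j) := by
    intro i; ext j; simp
  have step1 : ∏ i, ∏ j ∈ Ioi i, f i j
      = ∏ i, ∏ j, if i < j then f i j else 1 := by
    refine Finset.prod_congr rfl fun i _ => ?_
    rw [hIoi i, Finset.prod_filter]
  rw [step1]
  have step2 : ∏ i : Fin (2 * N), ∏ j : Fin (2 * N), (if i < j then f i j else (1:M))
      = ∏ a : Fin N, ∏ b : Fin N, ∏ s : Fin 2, ∏ t : Fin 2,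
          if e2 N (a,s) < e2 N (b,t) then f (e2 N (a,s)) (e2 N (b,t)) else 1 := by
    rw [← (e2 N).prod_comp (fun i => ∏ j, if i < j then f i j else 1)]
    rw [Fintype.prod_prod_type]
    refine Finset.prod_congr rfl fun a _ => ?_
    have : ∀ s : Fin 2, (∏ j, if e2 N (a,s) < j then f (e2 N (a,s)) j else (1:M))
        = ∏ b : Fin N, ∏ t : Fin 2,
            if e2 N (a,s) < e2 N (b,t) then f (e2 N (a,s)) (e2 N (b,t)) else 1 := by
      intro s
      rw [← (e2 N).prod_comp (fun j => if e2 N (a,s) < j then f (e2 N (a,s)) j else 1),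
        Fintype.prod_prod_type]
    simp only [this]
    exact Finset.prod_comm
  rw [step2]
  have key := prod_square_split (n := N)
    (fun a b => ∏ s : Fin 2, ∏ t : Fin 2,
      if e2 N (a,s) < e2 N (b,t) then f (e2 N (a,s)) (e2 N (b,t)) else (1:M))
    (by
      intro a b hba
      refine Finset.prod_eq_one fun s _ => Finset.prod_eq_one fun t _ => ?_
      rw [if_neg]
      rw [e2_lt_iff]
      have := s.2; have := t.2
      simp only [not_lt]
      have : b.1 < a.1 := hba
      omega)
  rw [key]
  congr 1
  · refine Finset.prod_congr rfl fun a _ => ?_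
    beta_reduce
    rw [Fin.prod_univ_two, Fin.prod_univ_two, Fin.prod_univ_two]
    have h00 : ¬ (e2 N (a,0) < e2 N (a,0)) := lt_irrefl _
    have h01 : e2 N (a,(0:Fin 2)) < e2 N (a,1) := by rw [e2_lt_iff]; simp
    have h10 : ¬ (e2 N (a,(1:Fin 2)) < e2 N (a,0)) := by rw [e2_lt_iff]; simp
    have h11 : ¬ (e2 N (a,(1:Fin 2)) < e2 N (a,1)) := lt_irrefl _
    rw [if_neg h00, if_pos h01, if_neg h10, if_neg h11]
    simp [i0, i1]
  · refine Finset.prod_congr rfl fun a _ => Finset.prod_congr rfl fun b hb => ?_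
    have hab0 : a < b := Finset.mem_Ioi.mp hb
    have hab : a.1 < b.1 := hab0
    beta_reduce
    rw [Fin.prod_univ_two, Fin.prod_univ_two, Fin.prod_univ_two]
    have c00 : e2 N (a,(0:Fin 2)) < e2 N (b,0) := by rw [e2_lt_iff]; simp; omega
    have c01 : e2 N (a,(0:Fin 2)) < e2 N (b,1) := by rw [e2_lt_iff]; simp; omega
    have c10 : e2 N (a,(1:Fin 2)) < e2 N (b,0) := by rw [e2_lt_iff]; simp; omega
    have c11 : e2 N (a,(1:Fin 2)) < e2 N (b,1) := by rw [e2_lt_iff]; simp; omega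
    rw [if_pos c00, if_pos c01, if_pos c10, if_pos c11]
    simp [i0, i1, mul_assoc]

lemma val_decomp (i : Fin (2 * N)) :
    i.1 = 2 * ((e2 N).symm i).1.1 + ((e2 N).symm i).2.1 :=
  (congrArg Fin.val ((e2 N).apply_symm_apply i)).symm

lemma pair_cases {P : Fin (2 * N) → Prop} (h0 : ∀ a, P (i0 N a)) (h1 : ∀ a, P (i1 N a))
    (i : Fin (2 * N)) : P i := by
  obtain ⟨⟨a, s⟩, rfl⟩ := (e2 N).surjective i
  fin_cases s
  · exact h0 a
  · exact h1 a

section Mat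
variable {R : Type*} [CommRing R] (x y : Fin N → R)

def PM (f g : Fin N → Fin (2 * N) → R) : Matrix (Fin (2 * N)) (Fin (2 * N)) R :=
  Matrix.of fun i k =>
    if ((e2 N).symm i).2 = 0 then f ((e2 N).symm i).1 k else g ((e2 N).symm i).1 k

@[simp] lemma PM_i0 (f g : Fin N → Fin (2 * N) → R) (a : Fin N) (k) :
    PM N f g (i0 N a) k = f a k := by simp [PM, i0]

@[simp] lemma PM_i1 (f g : Fin N → Fin (2 * N) → R) (a : Fin N) (k) :
    PM N f g (i1 N a) k = g a k := by simp [PM, i1]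

/-- the `w` vector of interleaved points -/
def wvec : Fin (2 * N) → R := fun i =>
  if ((e2 N).symm i).2 = 0 then x ((e2 N).symm i).1 else y ((e2 N).symm i).1

@[simp] lemma wvec_i0 (a : Fin N) : wvec N x y (i0 N a) = x a := by simp [wvec, i0]
@[simp] lemma wvec_i1 (a : Fin N) : wvec N x y (i1 N a) = y a := by simp [wvec, i1]

/-- interleaved Vandermonde -/
def VM : Matrix (Fin (2 * N)) (Fin (2 * N)) R :=
  PM N (fun a k => x a ^ k.1) (fun a k => y a ^ k.1)

def Vmod : Matrix (Fin (2 * N)) (Fin (2 * N)) R :=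
  PM N (fun a k => x a ^ k.1) (fun a k => y a ^ k.1 - x a ^ k.1)

def MP : Matrix (Fin (2 * N)) (Fin (2 * N)) R :=
  PM N (fun a k => x a ^ k.1) (fun a k => ∑ i ∈ range k.1, y a ^ i * x a ^ (k.1 - 1 - i))

lemma VM_eq_vandermonde : VM N x y = Matrix.vandermonde (wvec N x y) := by
  ext i k
  simp only [VM, PM, wvec, Matrix.vandermonde, Matrix.of_apply, apply_ite (fun r : R => r ^ k.1)]

lemma det_VM : (VM N x y).det
    = (∏ a, (y a - x a)) *
      ∏ a, ∏ b ∈ Ioi a, ((x b - x a) * (y b - x a) * (x b - y a) * (y b - y a)) := by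
  rw [VM_eq_vandermonde, Matrix.det_vandermonde]
  rw [prod_Ioi_split N (fun i j => wvec N x y j - wvec N x y i)]
  simp

/-- the row-operation elementary matrix -/
def FM : Matrix (Fin (2 * N)) (Fin (2 * N)) R :=
  Matrix.of fun i j =>
    if ((e2 N).symm i).2 = 1 ∧ j = i0 N ((e2 N).symm i).1 then (-1 : R) else 0

lemma FM_cond_zero {i j : Fin (2 * N)} (h : ¬ (j.1 + 1 = i.1)) : FM N (R := R) i j = 0 := by
  rw [FM, Matrix.of_apply, if_neg]
  rintro ⟨h1, rfl⟩
  have hd := val_decomp N i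
  have h1' : ((e2 N).symm i).2.1 = 1 := by
    have := congrArg Fin.val h1; simpa using this
  apply h
  rw [i0_val]
  omega

lemma det_one_add_FM : (1 + FM N (R := R)).det = 1 := by
  have htri : (1 + FM N (R := R)).BlockTriangular OrderDual.toDual := by
    intro i j hij
    have hij' : i < j := hij
    rw [Matrix.add_apply, Matrix.one_apply_ne (ne_of_lt hij'),
      FM_cond_zero N (by have : i.1 < j.1 := hij'; omega), add_zero]
  rw [Matrix.det_of_lowerTriangular _ htri]
  refine Finset.prod_eq_one fun i _ => ?_
  rw [Matrix.add_apply, Matrix.one_apply_eq, FM_cond_zero N (by omega), add_zero]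

lemma Vmod_eq_mul : Vmod N x y = (1 + FM N) * VM N x y := by
  rw [Matrix.add_mul, Matrix.one_mul]
  ext i k
  rw [Matrix.add_apply]
  induction i using pair_cases with
  | h0 a =>
    have hF : ∀ j, FM N (R := R) (i0 N a) j = 0 := by
      intro j
      rw [FM, Matrix.of_apply, if_neg]
      rintro ⟨h1, -⟩
      simp [i0] at h1
    simp [Vmod, VM, Matrix.mul_apply, hF]
  | h1 a =>
    have hF : ∀ j, FM N (R := R) (i1 N a) j = if j = i0 N a then (-1 : R) else 0 := by
      intro j
      simp [FM, i1]
    have : (FM N (R := R) * VM N x y) (i1 N a) k = - VM N x y (i0 N a) k := by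
      rw [Matrix.mul_apply]
      simp only [hF, ite_mul, neg_mul, one_mul, zero_mul]
      rw [Finset.sum_ite_eq' univ (i0 N a) (fun j => -(VM N x y j k))]
      simp
    rw [this]
    simp [Vmod, VM]
    ring

/-- diagonal scaling vector -/
def dvec : Fin (2 * N) → R := fun i =>
  if ((e2 N).symm i).2 = 0 then 1 else y ((e2 N).symm i).1 - x ((e2 N).symm i).1

@[simp] lemma dvec_i0 (a : Fin N) : dvec N x y (i0 N a) = 1 := by simp [dvec, i0]
@[simp] lemma dvec_i1 (a : Fin N) : dvec N x y (i1 N a) = y a - x a := by simp [dvec, i1]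

lemma Vmod_eq_diag_mul : Vmod N x y = Matrix.diagonal (dvec N x y) * MP N x y := by
  ext i k
  rw [Matrix.diagonal_mul]
  induction i using pair_cases with
  | h0 a => simp [Vmod, MP]
  | h1 a =>
    simp only [Vmod, MP, PM_i1, dvec_i1]
    rw [← geom_sum₂_mul (y a) (x a) k.1]
    ring

lemma det_VM_eq_prod_mul_det :
    (VM N x y).det = (∏ a, (y a - x a)) * (MP N x y).det := by
  have h1 : (Vmod N x y).det = (VM N x y).det := by
    rw [Vmod_eq_mul, Matrix.det_mul, det_one_add_FM, one_mul]
  have h2 : (Vmod N x y).det = (∏ a, (y a - x a)) * (MP N x y).det := by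
    rw [Vmod_eq_diag_mul, Matrix.det_mul, Matrix.det_diagonal]
    congr 1
    rw [prod_pairs N (dvec N x y)]
    simp
  rw [← h1, h2]

end Mat

/-- The determinant identity for `MP` over the polynomial ring. -/
theorem det_MP_poly :
    (MP N (R := MvPolynomial (Fin N × Fin 2) ℝ)
        (fun a => MvPolynomial.X (a, 0)) (fun a => MvPolynomial.X (a, 1))).det
      = ∏ a, ∏ b ∈ Ioi a,
          ((MvPolynomial.X (b,0) - MvPolynomial.X (a,0)) * (MvPolynomial.X (b,1) - MvPolynomial.X (a,0))
            * (MvPolynomial.X (b,0) - MvPolynomial.X (a,1)) * (MvPolynomial.X (b,1) - MvPolynomial.X (a,1))) := by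
  set x : Fin N → MvPolynomial (Fin N × Fin 2) ℝ := fun a => MvPolynomial.X (a, 0) with hx
  set y : Fin N → MvPolynomial (Fin N × Fin 2) ℝ := fun a => MvPolynomial.X (a, 1) with hy
  have hP : (∏ a, (y a - x a)) ≠ 0 := by
    intro h
    have := congrArg (MvPolynomial.eval (fun p : Fin N × Fin 2 => if p.2 = 0 then (0:ℝ) else 1)) h
    rw [map_prod, map_zero] at this
    simp [hx, hy] at this
  have h1 := det_VM N x y
  have h2 := det_VM_eq_prod_mul_det N x y
  rw [h2] at h1
  exact mul_left_cancel₀ hP h1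


lemma sum_pow_aux (v : ℝ) (k : ℕ) :
    ∑ i ∈ range k, v ^ i * v ^ (k - 1 - i) = (k : ℝ) * v ^ (k - 1) := by
  rw [Finset.sum_congr rfl (fun i hi => ?_), Finset.sum_const, card_range, nsmul_eq_mul]
  rw [← pow_add]
  congr 1
  have := mem_range.mp hi
  omega

/-- the confluent Vandermonde-type matrix over ℝ -/
noncomputable def Mmat (u : Fin N → ℝ) : Matrix (Fin (2 * N)) (Fin (2 * N)) ℝ :=
  PM N (fun a k => u a ^ k.1) (fun a k => (k.1 : ℝ) * u a ^ (k.1 - 1))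

theorem det_Mmat (u : Fin N → ℝ) :
    (Mmat N u).det = ∏ a, ∏ b ∈ Ioi a, (u b - u a) ^ 4 := by
  have h := congrArg (MvPolynomial.eval (fun p : Fin N × Fin 2 => u p.1)) (det_MP_poly N)
  rw [RingHom.map_det] at h
  have hmap : (MP N (R := MvPolynomial (Fin N × Fin 2) ℝ)
      (fun a => MvPolynomial.X (a, 0)) (fun a => MvPolynomial.X (a, 1))).map
        (MvPolynomial.eval fun p : Fin N × Fin 2 => u p.1) = Mmat N u := by
    ext i k
    simp only [Matrix.map_apply, MP, Mmat, PM, Matrix.of_apply,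
      apply_ite (MvPolynomial.eval fun p : Fin N × Fin 2 => u p.1)]
    congr 1
    · rw [map_pow, MvPolynomial.eval_X]
    · rw [map_sum]
      rw [← sum_pow_aux (u ((e2 N).symm i).1) k.1]
      refine Finset.sum_congr rfl fun j _ => ?_
      rw [map_mul, map_pow, map_pow, MvPolynomial.eval_X, MvPolynomial.eval_X]
  rw [RingHom.mapMatrix_apply, hmap] at h
  rw [h]
  rw [map_prod]
  refine Finset.prod_congr rfl fun a _ => ?_
  rw [map_prod]
  refine Finset.prod_congr rfl fun b _ => ?_
  simp only [map_mul, map_sub, MvPolynomial.eval_X]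
  ring

section Analysis

theorem int_prod_pi (μ : Measure ℝ) [SigmaFinite μ] (f : Fin N → ℝ → ℝ) :
    ∫ x : Fin N → ℝ, ∏ a, f a (x a) ∂(Measure.pi fun _ => μ) = ∏ a, ∫ v, f a v ∂μ := by
  letI : MeasureSpace ℝ := { volume := μ }
  haveI : ∀ _i : Fin N, SigmaFinite (volume : Measure ℝ) := fun _ => ‹SigmaFinite μ›
  exact MeasureTheory.integral_fintype_prod_eq_prod (ι := Fin N) (fun a => f a)

theorem integrable_prod_pi (μ : Measure ℝ) [SigmaFinite μ] (f : Fin N → ℝ → ℝ)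
    (hf : ∀ a, Integrable (f a) μ) :
    Integrable (fun x : Fin N → ℝ => ∏ a, f a (x a)) (Measure.pi fun _ => μ) := by
  letI : MeasureSpace ℝ := { volume := μ }
  haveI : SigmaFinite (volume : Measure ℝ) := ‹SigmaFinite μ›
  exact MeasureTheory.Integrable.fintype_prod (f := f) hf

noncomputable def mom (μ : Measure ℝ) (m : ℕ) : ℝ := ∫ v, v ^ m ∂μ

noncomputable def cc (μ : Measure ℝ) (s t : ℕ) : ℝ := (t : ℝ) * mom μ (s + t - 1)

lemma entry_prod_eq (v : ℝ) (s t : ℕ) :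
    v ^ s * ((t : ℝ) * v ^ (t - 1)) = (t : ℝ) * v ^ (s + t - 1) := by
  cases t with
  | zero => simp
  | succ t =>
    have h1 : t + 1 - 1 = t := rfl
    have h2 : s + (t + 1) - 1 = s + t := by omega
    rw [h1, h2, pow_add]
    push_cast
    ring

theorem integral_det (μ : Measure ℝ) [IsProbabilityMeasure μ]
    (hmom : ∀ m : ℕ, m ≤ 4 * N → Integrable (fun u : ℝ => u ^ m) μ) :
    ∫ u : Fin N → ℝ, (Mmat N u).det ∂(Measure.pi fun _ => μ)
      = ∑ σ : Equiv.Perm (Fin (2 * N)), ((Equiv.Perm.sign σ : ℤ) : ℝ) *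
          ∏ a, cc μ (σ (i0 N a)).1 (σ (i1 N a)).1 := by
  have hint : ∀ s t : Fin (2 * N),
      Integrable (fun v : ℝ => ((t.1 : ℝ)) * v ^ (s.1 + t.1 - 1)) μ := by
    intro s t
    refine (hmom _ ?_).const_mul _
    have := s.2; have := t.2; omega
  have hdet : (fun u : Fin N → ℝ => (Mmat N u).det)
      = fun u => ∑ σ : Equiv.Perm (Fin (2 * N)), ((Equiv.Perm.sign σ : ℤ) : ℝ) *
          ∏ a, (((σ (i1 N a)).1 : ℝ) * (u a) ^ ((σ (i0 N a)).1 + (σ (i1 N a)).1 - 1)) := by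
    funext u
    rw [← Matrix.det_transpose, Matrix.det_apply']
    refine Finset.sum_congr rfl fun σ _ => ?_
    congr 1
    rw [show (∏ i, Matrix.transpose (Mmat N u) (σ i) i) = ∏ i, Mmat N u i (σ i) from
      Finset.prod_congr rfl fun i _ => Matrix.transpose_apply _ _ _]
    rw [prod_pairs N (fun i => Mmat N u i (σ i))]
    refine Finset.prod_congr rfl fun a _ => ?_
    rw [Mmat, PM_i0, PM_i1]
    exact entry_prod_eq (u a) _ _
  rw [hdet, integral_finset_sum]
  · refine Finset.sum_congr rfl fun σ _ => ?_
    rw [integral_const_mul]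
    congr 1
    rw [int_prod_pi N μ (fun a v => ((σ (i1 N a)).1 : ℝ) * v ^ ((σ (i0 N a)).1 + (σ (i1 N a)).1 - 1))]
    refine Finset.prod_congr rfl fun a _ => ?_
    rw [integral_const_mul]
    rfl
  · intro σ _
    exact (integrable_prod_pi N μ _ (fun a => hint _ _)).const_mul _

end Analysis

section Pf

def swapP (a : Fin N) : Equiv.Perm (Fin (2 * N)) := Equiv.swap (i0 N a) (i1 N a)

lemma swapP_commute (a b : Fin N) (hab : a ≠ b) : Commute (swapP N a) (swapP N b) := by
  apply Equiv.Perm.Disjoint.commute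
  intro z
  have hv : a.1 ≠ b.1 := fun h => hab (Fin.ext h)
  by_cases h : z = i0 N a ∨ z = i1 N a
  · right
    refine Equiv.swap_apply_of_ne_of_ne ?_ ?_ <;> rintro rfl <;> rcases h with h | h <;>
      (have := congrArg Fin.val h; simp only [i0_val, i1_val] at this; omega)
  · push_neg at h
    exact Or.inl (Equiv.swap_apply_of_ne_of_ne h.1 h.2)

def tauP (t : Finset (Fin N)) : Equiv.Perm (Fin (2 * N)) :=
  t.noncommProd (fun a => swapP N a) (fun a _ b _ hab => swapP_commute N a b hab)

@[simp] lemma tauP_empty : tauP N ∅ = 1 := Finset.noncommProd_empty _ _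

lemma tauP_insert (a : Fin N) (t : Finset (Fin N)) (ha : a ∉ t) :
    tauP N (insert a t) = swapP N a * tauP N t :=
  Finset.noncommProd_insert_of_notMem _ _ _ _ ha

lemma sign_tauP (t : Finset (Fin N)) : Equiv.Perm.sign (tauP N t) = (-1) ^ t.card := by
  induction t using Finset.induction_on with
  | empty => simp
  | @insert a s ha ih =>
    rw [tauP_insert N a s ha, map_mul, ih, Finset.card_insert_of_notMem ha, pow_succ,
      swapP, Equiv.Perm.sign_swap (i0_ne_i1 N a a)]
    exact mul_comm _ _

lemma tauP_apply_i0 (t : Finset (Fin N)) (a : Fin N) :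
    tauP N t (i0 N a) = if a ∈ t then i1 N a else i0 N a := by
  induction t using Finset.induction_on with
  | empty => simp
  | @insert b s hb ih =>
    rw [tauP_insert N b s hb, Equiv.Perm.mul_apply, ih]
    by_cases hab : a = b
    · subst hab
      rw [if_neg (fun h => hb h), if_pos (Finset.mem_insert_self a s)]
      exact Equiv.swap_apply_left _ _
    · have h1 : i0 N a ≠ i0 N b := fun h => hab (i0_inj N h)
      have h2 : i0 N a ≠ i1 N b := i0_ne_i1 N a b
      have h3 : i1 N a ≠ i0 N b := fun h => (i0_ne_i1 N b a) h.symm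
      have h4 : i1 N a ≠ i1 N b := fun h => hab (i1_inj N h)
      simp only [Finset.mem_insert, hab, false_or]
      split
      · exact Equiv.swap_apply_of_ne_of_ne h3 h4
      · exact Equiv.swap_apply_of_ne_of_ne h1 h2

lemma tauP_apply_i1 (t : Finset (Fin N)) (a : Fin N) :
    tauP N t (i1 N a) = if a ∈ t then i0 N a else i1 N a := by
  induction t using Finset.induction_on with
  | empty => simp
  | @insert b s hb ih =>
    rw [tauP_insert N b s hb, Equiv.Perm.mul_apply, ih]
    by_cases hab : a = b
    · subst hab
      rw [if_neg (fun h => hb h), if_pos (Finset.mem_insert_self a s)]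
      exact Equiv.swap_apply_right _ _
    · have h1 : i0 N a ≠ i0 N b := fun h => hab (i0_inj N h)
      have h2 : i0 N a ≠ i1 N b := i0_ne_i1 N a b
      have h3 : i1 N a ≠ i0 N b := fun h => (i0_ne_i1 N b a) h.symm
      have h4 : i1 N a ≠ i1 N b := fun h => hab (i1_inj N h)
      simp only [Finset.mem_insert, hab, false_or]
      split
      · exact Equiv.swap_apply_of_ne_of_ne h1 h2
      · exact Equiv.swap_apply_of_ne_of_ne h3 h4

theorem sum_pf (c' : Fin (2 * N) → Fin (2 * N) → ℝ) :
    ∑ σ : Equiv.Perm (Fin (2 * N)), ((Equiv.Perm.sign σ : ℤ) : ℝ) *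
        ∏ a, (c' (σ (i0 N a)) (σ (i1 N a)) - c' (σ (i1 N a)) (σ (i0 N a)))
      = 2 ^ N * ∑ σ : Equiv.Perm (Fin (2 * N)), ((Equiv.Perm.sign σ : ℤ) : ℝ) *
          ∏ a, c' (σ (i0 N a)) (σ (i1 N a)) := by
  classical
  have expand : ∀ σ : Equiv.Perm (Fin (2 * N)),
      ∏ a, (c' (σ (i0 N a)) (σ (i1 N a)) - c' (σ (i1 N a)) (σ (i0 N a)))
      = ∑ t ∈ (univ : Finset (Fin N)).powerset,
          (∏ a ∈ t, -c' (σ (i1 N a)) (σ (i0 N a))) *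
            ∏ a ∈ univ \ t, c' (σ (i0 N a)) (σ (i1 N a)) := by
    intro σ
    rw [← Finset.prod_add]
    refine Finset.prod_congr rfl fun a _ => ?_
    ring
  calc ∑ σ : Equiv.Perm (Fin (2 * N)), ((Equiv.Perm.sign σ : ℤ) : ℝ) *
        ∏ a, (c' (σ (i0 N a)) (σ (i1 N a)) - c' (σ (i1 N a)) (σ (i0 N a)))
      = ∑ σ : Equiv.Perm (Fin (2 * N)), ∑ t ∈ (univ : Finset (Fin N)).powerset,
          ((Equiv.Perm.sign σ : ℤ) : ℝ) * ((∏ a ∈ t, -c' (σ (i1 N a)) (σ (i0 N a))) *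
            ∏ a ∈ univ \ t, c' (σ (i0 N a)) (σ (i1 N a))) := by
        refine Finset.sum_congr rfl fun σ _ => ?_
        rw [expand σ, Finset.mul_sum]
    _ = ∑ t ∈ (univ : Finset (Fin N)).powerset, ∑ σ : Equiv.Perm (Fin (2 * N)),
          ((Equiv.Perm.sign σ : ℤ) : ℝ) * ((∏ a ∈ t, -c' (σ (i1 N a)) (σ (i0 N a))) *
            ∏ a ∈ univ \ t, c' (σ (i0 N a)) (σ (i1 N a))) := Finset.sum_comm
    _ = ∑ t ∈ (univ : Finset (Fin N)).powerset,
          ∑ σ : Equiv.Perm (Fin (2 * N)), ((Equiv.Perm.sign σ : ℤ) : ℝ) *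
            ∏ a, c' (σ (i0 N a)) (σ (i1 N a)) := by
        refine Finset.sum_congr rfl fun t _ => ?_
        refine Fintype.sum_bijective (fun σ => σ * tauP N t)
          (Group.mulRight_bijective (tauP N t)) _ _ fun σ => ?_
        have hsign : ((Equiv.Perm.sign (σ * tauP N t) : ℤ) : ℝ)
            = ((Equiv.Perm.sign σ : ℤ) : ℝ) * (-1 : ℝ) ^ t.card := by
          rw [map_mul, sign_tauP]
          push_cast
          ring
        have hprod : ∏ a, c' ((σ * tauP N t) (i0 N a)) ((σ * tauP N t) (i1 N a))
            = (∏ a ∈ t, c' (σ (i1 N a)) (σ (i0 N a))) *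
              ∏ a ∈ univ \ t, c' (σ (i0 N a)) (σ (i1 N a)) := by
          have : ∀ a : Fin N, c' ((σ * tauP N t) (i0 N a)) ((σ * tauP N t) (i1 N a))
              = if a ∈ t then c' (σ (i1 N a)) (σ (i0 N a))
                else c' (σ (i0 N a)) (σ (i1 N a)) := by
            intro a
            rw [Equiv.Perm.mul_apply, Equiv.Perm.mul_apply, tauP_apply_i0, tauP_apply_i1]
            split <;> simp
          rw [Finset.prod_congr rfl (fun a _ => this a), Finset.prod_ite, Finset.filter_mem_eq_inter,
            Finset.univ_inter, ← Finset.sdiff_eq_filter]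
        have hneg : (∏ a ∈ t, -c' (σ (i1 N a)) (σ (i0 N a)))
            = (-1 : ℝ) ^ t.card * ∏ a ∈ t, c' (σ (i1 N a)) (σ (i0 N a)) := by
          rw [← Finset.prod_const, ← Finset.prod_mul_distrib]
          refine Finset.prod_congr rfl fun a _ => ?_
          ring
        rw [hsign, hprod, hneg]
        ring
    _ = 2 ^ N * ∑ σ : Equiv.Perm (Fin (2 * N)), ((Equiv.Perm.sign σ : ℤ) : ℝ) *
          ∏ a, c' (σ (i0 N a)) (σ (i1 N a)) := by
        rw [Finset.sum_const, Finset.card_powerset, Finset.card_univ, Fintype.card_fin,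
          nsmul_eq_mul]
        push_cast
        ring

end Pf
end DB

/-- The Pfaffian of a `2n × 2n` real matrix. -/
noncomputable def pfaffian {n : ℕ} (A : Matrix (Fin (2 * n)) (Fin (2 * n)) ℝ) : ℝ :=
  ((2 : ℝ) ^ n * n.factorial)⁻¹ *
    ∑ σ : Equiv.Perm (Fin (2 * n)), (Equiv.Perm.sign σ : ℤ) *
      ∏ i : Fin n, A (σ ⟨2 * i.1, by have := i.isLt; omega⟩)
                     (σ ⟨2 * i.1 + 1, by have := i.isLt; omega⟩)

/-- de Bruijn's identity for β = 4. -/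
theorem deBruijn_beta_four (N : ℕ) (hN : 0 < N) (I : Set ℝ) (hI : I.OrdConnected)
    (μ : Measure ℝ) [IsProbabilityMeasure μ] (hsupp : μ Iᶜ = 0)
    (hmom : ∀ m : ℕ, m ≤ 4 * N → Integrable (fun u : ℝ => u ^ m) μ) :
    ((N.factorial : ℝ))⁻¹ *
        ∫ u : Fin N → ℝ, (∏ i : Fin N, ∏ j ∈ Finset.Ioi i, (u j - u i) ^ 4)
          ∂(Measure.pi fun _ => μ)
      = pfaffian (Matrix.of fun k ℓ : Fin (2 * N) =>
          (((ℓ : ℕ) : ℝ) - ((k : ℕ) : ℝ)) * ∫ u : ℝ, u ^ ((k : ℕ) + (ℓ : ℕ) - 1) ∂μ) := by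
  classical
  have hdet : (fun u : Fin N → ℝ => ∏ i : Fin N, ∏ j ∈ Finset.Ioi i, (u j - u i) ^ 4)
      = fun u => (DB.Mmat N u).det := funext fun u => (DB.det_Mmat N u).symm
  rw [hdet, DB.integral_det N μ hmom]
  unfold pfaffian
  have hi0 : ∀ (a : Fin N) (h : 2 * a.1 < 2 * N),
      (⟨2 * a.1, h⟩ : Fin (2 * N)) = DB.i0 N a := fun a h => Fin.ext (by simp)
  have hi1 : ∀ (a : Fin N) (h : 2 * a.1 + 1 < 2 * N),
      (⟨2 * a.1 + 1, h⟩ : Fin (2 * N)) = DB.i1 N a := fun a h => Fin.ext (by simp)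
  simp only [hi0, hi1, Matrix.of_apply]
  have hBsum : ∑ σ : Equiv.Perm (Fin (2 * N)), ((Equiv.Perm.sign σ : ℤ) : ℝ) *
      ∏ a : Fin N, (((((σ (DB.i1 N a)) : ℕ)) : ℝ) - ((((σ (DB.i0 N a)) : ℕ)) : ℝ)) *
        ∫ u : ℝ, u ^ ((((σ (DB.i0 N a)) : ℕ)) + (((σ (DB.i1 N a)) : ℕ)) - 1) ∂μ
      = 2 ^ N * ∑ σ : Equiv.Perm (Fin (2 * N)), ((Equiv.Perm.sign σ : ℤ) : ℝ) *
          ∏ a : Fin N, DB.cc μ (σ (DB.i0 N a)).1 (σ (DB.i1 N a)).1 := by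
    rw [← DB.sum_pf N (fun p q => DB.cc μ p.1 q.1)]
    refine Finset.sum_congr rfl fun σ _ => ?_
    congr 1
    refine Finset.prod_congr rfl fun a _ => ?_
    simp only [DB.cc, DB.mom]
    rw [show (σ (DB.i1 N a)).1 + (σ (DB.i0 N a)).1 - 1
        = (σ (DB.i0 N a)).1 + (σ (DB.i1 N a)).1 - 1 from by omega]
    ring
  rw [hBsum]
  have h2 : (2:ℝ) ^ N ≠ 0 := pow_ne_zero _ two_ne_zero
  have hf : ((N.factorial : ℝ)) ≠ 0 := Nat.cast_ne_zero.mpr (Nat.factorial_ne_zero N)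
  field_simp
end
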